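/- Let A be a discrete random variable, Q, Y, Y' further discrete random variables, and X, X' discrete random variables with H(X | A, Q, Y) = 0, H(X' | A, Q, X, Y, Y') = 0, X independent of (Q, Y), and X' independent of (Q, X, Y, Y'). Then H(A) ≥ H(X) + H(X'). -/

import Mathlib

open scoped BigOperators

/-- Probability that the discrete random variable `X` (on a finite probability
space with weights `μ`) takes the value `a`. -/
noncomputable def pr {Ω α : Type*} [Fintype Ω] (μ : Ω → ℝ) [DecidableEq α]
    (X : Ω → α) (a : α) : ℝ :=
  ∑ ω, if X ω = a then μ ω else 0

/-- Shannon entropy (in bits) of the discrete random variable `X`. -/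
noncomputable def entH {Ω α : Type*} [Fintype Ω] [Fintype α] [DecidableEq α]
    (μ : Ω → ℝ) (X : Ω → α) : ℝ :=
  -∑ a, pr μ X a * Real.logb 2 (pr μ X a)

/-- Conditional Shannon entropy `H(X | Y) = H(X, Y) - H(Y)`. -/
noncomputable def condH {Ω α β : Type*} [Fintype Ω] [Fintype α] [DecidableEq α]
    [Fintype β] [DecidableEq β] (μ : Ω → ℝ) (X : Ω → α) (Y : Ω → β) : ℝ :=
  entH μ (fun ω => (X ω, Y ω)) - entH μ Y

/-- `X` and `Y` are independent random variables. -/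
def IndepRV {Ω α β : Type*} [Fintype Ω] [DecidableEq α] [DecidableEq β]
    (μ : Ω → ℝ) (X : Ω → α) (Y : Ω → β) : Prop :=
  ∀ a b, pr μ (fun ω => (X ω, Y ω)) (a, b) = pr μ X a * pr μ Y b

/-- `μ` is a probability mass function on the finite sample space `Ω`. -/
def IsPMF {Ω : Type*} [Fintype Ω] (μ : Ω → ℝ) : Prop :=
  (∀ ω, 0 ≤ μ ω) ∧ ∑ ω, μ ω = 1

/-- Core Gibbs-type inequality for submodularity of entropy. -/
lemma gibbs_submod {α β γ : Type*} [Fintype α] [Fintype β] [Fintype γ]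
    (p : α → β → γ → ℝ) (q : α → β → ℝ) (r : β → γ → ℝ) (s : β → ℝ)
    (hp : ∀ a b c, 0 ≤ p a b c)
    (hq : ∀ a b, q a b = ∑ c, p a b c)
    (hr : ∀ b c, r b c = ∑ a, p a b c)
    (hs : ∀ b, s b = ∑ a, ∑ c, p a b c)
    (hsum : ∑ b, s b = 1) :
    (∑ a, ∑ b, q a b * Real.logb 2 (q a b)) + ∑ b, ∑ c, r b c * Real.logb 2 (r b c)
      ≤ (∑ a, ∑ b, ∑ c, p a b c * Real.logb 2 (p a b c)) + ∑ b, s b * Real.logb 2 (s b) := by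
  have hlog2 : (0:ℝ) < Real.log 2 := Real.log_pos one_lt_two
  have hq0 : ∀ a b, 0 ≤ q a b := fun a b => (hq a b) ▸ Finset.sum_nonneg fun c _ => hp a b c
  have hr0 : ∀ b c, 0 ≤ r b c := fun b c => (hr b c) ▸ Finset.sum_nonneg fun a _ => hp a b c
  have hs0 : ∀ b, 0 ≤ s b := fun b =>
    (hs b) ▸ Finset.sum_nonneg fun a _ => Finset.sum_nonneg fun c _ => hp a b c
  have hpq : ∀ a b c, p a b c ≤ q a b := fun a b c => (hq a b) ▸
    Finset.single_le_sum (fun c _ => hp a b c) (Finset.mem_univ c)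
  have hpr : ∀ a b c, p a b c ≤ r b c := fun a b c => (hr b c) ▸
    Finset.single_le_sum (fun a _ => hp a b c) (Finset.mem_univ a)
  have hps : ∀ a b c, p a b c ≤ s b := by
    intro a b c
    rw [hs b]
    calc p a b c ≤ ∑ c, p a b c :=
          Finset.single_le_sum (fun c _ => hp a b c) (Finset.mem_univ c)
      _ ≤ ∑ a, ∑ c, p a b c :=
          Finset.single_le_sum (fun a _ => Finset.sum_nonneg fun c _ => hp a b c)
            (Finset.mem_univ a)
  -- pointwise key inequality
  have key : ∀ a b c,
      p a b c * Real.logb 2 (q a b) + p a b c * Real.logb 2 (r b c)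
        - p a b c * Real.logb 2 (p a b c) - p a b c * Real.logb 2 (s b)
      ≤ ((if s b = 0 then 0 else q a b * r b c / s b) - p a b c) / Real.log 2 := by
    intro a b c
    rcases eq_or_lt_of_le (hp a b c) with h0 | h0
    · rw [← h0]
      have h1 : (0:ℝ) ≤ if s b = 0 then 0 else q a b * r b c / s b := by
        split
        · exact le_rfl
        · exact div_nonneg (mul_nonneg (hq0 a b) (hr0 b c)) (hs0 b)
      simp only [zero_mul, add_zero, zero_add, sub_zero]
      exact div_nonneg h1 hlog2.le
    · have hqpos : 0 < q a b := lt_of_lt_of_le h0 (hpq a b c)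
      have hrpos : 0 < r b c := lt_of_lt_of_le h0 (hpr a b c)
      have hspos : 0 < s b := lt_of_lt_of_le h0 (hps a b c)
      rw [if_neg hspos.ne']
      have hlog : Real.log (q a b * r b c / (p a b c * s b))
          ≤ q a b * r b c / (p a b c * s b) - 1 :=
        Real.log_le_sub_one_of_pos (by positivity)
      have hsplit : Real.log (q a b * r b c / (p a b c * s b))
          = Real.log (q a b) + Real.log (r b c) - Real.log (p a b c) - Real.log (s b) := by
        rw [Real.log_div (by positivity) (by positivity), Real.log_mul hqpos.ne' hrpos.ne',
          Real.log_mul h0.ne' hspos.ne']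
        ring
      have e1 : p a b c * Real.logb 2 (q a b) + p a b c * Real.logb 2 (r b c)
          - p a b c * Real.logb 2 (p a b c) - p a b c * Real.logb 2 (s b)
          = p a b c * Real.log (q a b * r b c / (p a b c * s b)) / Real.log 2 := by
        simp only [Real.logb]
        rw [hsplit]
        ring
      have e2 : p a b c * (q a b * r b c / (p a b c * s b) - 1)
          = q a b * r b c / s b - p a b c := by
        field_simp
      have h3 : p a b c * Real.log (q a b * r b c / (p a b c * s b))
          ≤ q a b * r b c / s b - p a b c := by
        calc p a b c * Real.log (q a b * r b c / (p a b c * s b))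
            ≤ p a b c * (q a b * r b c / (p a b c * s b) - 1) :=
              mul_le_mul_of_nonneg_left hlog h0.le
          _ = q a b * r b c / s b - p a b c := e2
      rw [e1]
      gcongr
  -- sum of the slack terms is zero
  have hsumq : ∀ b, ∑ a, q a b = s b := by
    intro b
    rw [hs b]
    exact Finset.sum_congr rfl fun a _ => hq a b
  have hsumr : ∀ b, ∑ c, r b c = s b := by
    intro b
    rw [hs b, Finset.sum_comm]
    exact Finset.sum_congr rfl fun c _ => hr b c
  have hsump : ∑ a, ∑ b, ∑ c, p a b c = 1 := by
    rw [Finset.sum_comm, ← hsum]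
    exact Finset.sum_congr rfl fun b _ => (hs b).symm
  have hg : ∑ a, ∑ b, ∑ c,
      ((if s b = 0 then 0 else q a b * r b c / s b) - p a b c) = 0 := by
    simp only [Finset.sum_sub_distrib]
    rw [hsump]
    have : ∑ a, ∑ b, ∑ c, (if s b = 0 then 0 else q a b * r b c / s b) = ∑ b, s b := by
      rw [Finset.sum_comm]
      refine Finset.sum_congr rfl fun b _ => ?_
      by_cases hb : s b = 0
      · simp [hb]
      · simp only [if_neg hb]
        have : ∀ a, ∑ c, q a b * r b c / s b = q a b := by
          intro a
          rw [← Finset.sum_div, ← Finset.mul_sum, hsumr b,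
            mul_div_assoc, div_self hb, mul_one]
        rw [Finset.sum_congr rfl fun a _ => this a, hsumq b]
    rw [this, hsum]
    ring
  -- combine
  have main : ∑ a, ∑ b, ∑ c,
      (p a b c * Real.logb 2 (q a b) + p a b c * Real.logb 2 (r b c)
        - p a b c * Real.logb 2 (p a b c) - p a b c * Real.logb 2 (s b)) ≤ 0 := by
    calc ∑ a, ∑ b, ∑ c,
        (p a b c * Real.logb 2 (q a b) + p a b c * Real.logb 2 (r b c)
          - p a b c * Real.logb 2 (p a b c) - p a b c * Real.logb 2 (s b))
        ≤ ∑ a, ∑ b, ∑ c,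
            ((if s b = 0 then 0 else q a b * r b c / s b) - p a b c) / Real.log 2 := by
          refine Finset.sum_le_sum fun a _ => Finset.sum_le_sum fun b _ =>
            Finset.sum_le_sum fun c _ => key a b c
      _ = (∑ a, ∑ b, ∑ c,
            ((if s b = 0 then 0 else q a b * r b c / s b) - p a b c)) / Real.log 2 := by
          simp only [Finset.sum_div]
      _ = 0 := by rw [hg, zero_div]
  -- expand the marginal entropies into triple sums
  have eqq : ∑ a, ∑ b, q a b * Real.logb 2 (q a b)
      = ∑ a, ∑ b, ∑ c, p a b c * Real.logb 2 (q a b) := by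
    refine Finset.sum_congr rfl fun a _ => Finset.sum_congr rfl fun b _ => ?_
    rw [hq a b, Finset.sum_mul]
  have eqr : ∑ b, ∑ c, r b c * Real.logb 2 (r b c)
      = ∑ a, ∑ b, ∑ c, p a b c * Real.logb 2 (r b c) := by
    calc ∑ b, ∑ c, r b c * Real.logb 2 (r b c)
        = ∑ b, ∑ c, ∑ a, p a b c * Real.logb 2 (r b c) := by
          refine Finset.sum_congr rfl fun b _ => Finset.sum_congr rfl fun c _ => ?_
          rw [hr b c, Finset.sum_mul]
      _ = ∑ b, ∑ a, ∑ c, p a b c * Real.logb 2 (r b c) :=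
          Finset.sum_congr rfl fun b _ => Finset.sum_comm
      _ = ∑ a, ∑ b, ∑ c, p a b c * Real.logb 2 (r b c) := Finset.sum_comm
  have eqs : ∑ b, s b * Real.logb 2 (s b)
      = ∑ a, ∑ b, ∑ c, p a b c * Real.logb 2 (s b) := by
    calc ∑ b, s b * Real.logb 2 (s b)
        = ∑ b, ∑ a, ∑ c, p a b c * Real.logb 2 (s b) := by
          refine Finset.sum_congr rfl fun b _ => ?_
          rw [hs b, Finset.sum_mul]
          exact Finset.sum_congr rfl fun a _ => Finset.sum_mul _ _ _
      _ = ∑ a, ∑ b, ∑ c, p a b c * Real.logb 2 (s b) := Finset.sum_comm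
  have expand : ∑ a, ∑ b, ∑ c,
      (p a b c * Real.logb 2 (q a b) + p a b c * Real.logb 2 (r b c)
        - p a b c * Real.logb 2 (p a b c) - p a b c * Real.logb 2 (s b))
      = (∑ a, ∑ b, q a b * Real.logb 2 (q a b))
        + (∑ b, ∑ c, r b c * Real.logb 2 (r b c))
        - (∑ a, ∑ b, ∑ c, p a b c * Real.logb 2 (p a b c))
        - (∑ b, s b * Real.logb 2 (s b)) := by
    rw [eqq, eqr, eqs]
    simp only [Finset.sum_sub_distrib, Finset.sum_add_distrib]
  linarith [main, expand]

section aux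
variable {Ω : Type*} [Fintype Ω] (μ : Ω → ℝ)

variable {Ω : Type*} [Fintype Ω] (μ : Ω → ℝ)

lemma pr_nonneg {α : Type*} [DecidableEq α] (h : ∀ ω, 0 ≤ μ ω) (X : Ω → α) (a : α) :
    0 ≤ pr μ X a := by
  apply Finset.sum_nonneg; intro ω _; split <;> simp [h ω]

lemma pr_sum {α : Type*} [Fintype α] [DecidableEq α] (h : ∑ ω, μ ω = 1) (X : Ω → α) :
    ∑ a, pr μ X a = 1 := by
  rw [← h]; simp only [pr]; rw [Finset.sum_comm]
  exact Finset.sum_congr rfl fun ω _ => by simp [Finset.sum_ite_eq']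

lemma pr_snd {α β : Type*} [Fintype α] [DecidableEq α] [DecidableEq β]
    (U : Ω → α) (V : Ω → β) (b : β) :
    ∑ a, pr μ (fun ω => (U ω, V ω)) (a, b) = pr μ V b := by
  simp only [pr]
  rw [Finset.sum_comm]
  refine Finset.sum_congr rfl fun ω _ => ?_
  by_cases hb : V ω = b
  · simp [Prod.ext_iff, hb, Finset.sum_ite_eq']
  · simp [Prod.ext_iff, hb]

lemma pr_fst {α β : Type*} [Fintype β] [DecidableEq α] [DecidableEq β]
    (U : Ω → α) (V : Ω → β) (a : α) :
    ∑ b, pr μ (fun ω => (U ω, V ω)) (a, b) = pr μ U a := by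
  simp only [pr]
  rw [Finset.sum_comm]
  refine Finset.sum_congr rfl fun ω _ => ?_
  by_cases ha : U ω = a
  · simp [Prod.ext_iff, ha, Finset.sum_ite_eq']
  · simp [Prod.ext_iff, ha]

lemma pr_pair3 {α β γ : Type*} [Fintype γ] [DecidableEq α] [DecidableEq β] [DecidableEq γ]
    (U : Ω → α) (V : Ω → β) (W : Ω → γ) (a : α) (b : β) :
    ∑ c, pr μ (fun ω => (U ω, V ω, W ω)) (a, b, c) = pr μ (fun ω => (U ω, V ω)) (a, b) := by
  simp only [pr]
  rw [Finset.sum_comm]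
  refine Finset.sum_congr rfl fun ω _ => ?_
  by_cases hab : U ω = a ∧ V ω = b
  · simp [Prod.ext_iff, hab.1, hab.2, Finset.sum_ite_eq']
  · rw [not_and_or] at hab
    rcases hab with h | h <;> simp [Prod.ext_iff, h]

lemma pr_le_pair {α β : Type*} [DecidableEq α] [DecidableEq β]
    (h : ∀ ω, 0 ≤ μ ω) (U : Ω → α) (V : Ω → β) (a : α) (b : β) :
    pr μ (fun ω => (U ω, V ω)) (a, b) ≤ pr μ V b := by
  apply Finset.sum_le_sum
  intro ω _
  by_cases hb : V ω = b
  · by_cases ha : U ω = a <;> simp [Prod.ext_iff, ha, hb, h ω]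
  · simp [Prod.ext_iff, hb]

/-- relabeling invariance -/
lemma entH_comp {α α' : Type*} [Fintype α] [DecidableEq α] [Fintype α'] [DecidableEq α']
    (Z : Ω → α) (W : Ω → α') (f : α → α') (hf : Function.Injective f)
    (hfz : ∀ ω, f (Z ω) = W ω) : entH μ W = entH μ Z := by
  have hval : ∀ a, pr μ W (f a) = pr μ Z a := by
    intro a
    refine Finset.sum_congr rfl fun ω _ => ?_
    rw [← hfz ω]
    by_cases h : Z ω = a
    · simp [h]
    · have h2 : f (Z ω) ≠ f a := fun hh => h (hf hh)
      simp [h, h2]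
  have hzero : ∀ b : α', b ∉ Finset.univ.image f → pr μ W b = 0 := by
    intro b hb
    apply Finset.sum_eq_zero
    intro ω _
    rw [← hfz ω]
    have : f (Z ω) ≠ b := by
      intro hh; exact hb (by rw [← hh]; exact Finset.mem_image_of_mem f (Finset.mem_univ _))
    simp [this]
  unfold entH
  congr 1
  rw [← Finset.sum_subset (Finset.subset_univ (Finset.univ.image f))
    (fun b _ hb => by rw [hzero b hb]; ring),
    Finset.sum_image (fun a _ a' _ h => hf h)]
  exact Finset.sum_congr rfl fun a _ => by rw [hval]

end aux

section aux2
variable {Ω : Type*} [Fintype Ω] (μ : Ω → ℝ)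

lemma entH_submod {α β γ : Type*} [Fintype α] [DecidableEq α] [Fintype β] [DecidableEq β]
    [Fintype γ] [DecidableEq γ] (hμ : IsPMF μ) (U : Ω → α) (V : Ω → β) (W : Ω → γ) :
    entH μ (fun ω => (U ω, V ω, W ω)) + entH μ V
      ≤ entH μ (fun ω => (U ω, V ω)) + entH μ (fun ω => (V ω, W ω)) := by
  have h := gibbs_submod (fun a b c => pr μ (fun ω => (U ω, V ω, W ω)) (a, b, c))
      (fun a b => pr μ (fun ω => (U ω, V ω)) (a, b))
      (fun b c => pr μ (fun ω => (V ω, W ω)) (b, c))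
      (fun b => pr μ V b)
      (fun a b c => pr_nonneg μ hμ.1 _ _)
      (fun a b => (pr_pair3 μ U V W a b).symm)
      (fun b c => (pr_snd μ U (fun ω => (V ω, W ω)) (b, c)).symm)
      (fun b => by
        show pr μ V b = ∑ a, ∑ c, pr μ (fun ω => (U ω, V ω, W ω)) (a, b, c)
        rw [← pr_snd μ U V b]
        exact Finset.sum_congr rfl fun a _ => (pr_pair3 μ U V W a b).symm)
      (pr_sum μ hμ.2 V)
  unfold entH
  simp only [Fintype.sum_prod_type]
  linarith [h]

lemma entH_snd_le {α β : Type*} [Fintype α] [DecidableEq α] [Fintype β] [DecidableEq β]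
    (h0 : ∀ ω, 0 ≤ μ ω) (U : Ω → α) (V : Ω → β) :
    entH μ V ≤ entH μ (fun ω => (U ω, V ω)) := by
  unfold entH
  apply neg_le_neg
  simp only [Fintype.sum_prod_type]
  rw [Finset.sum_comm]
  refine Finset.sum_le_sum fun b _ => ?_
  calc ∑ a, pr μ (fun ω => (U ω, V ω)) (a, b)
          * Real.logb 2 (pr μ (fun ω => (U ω, V ω)) (a, b))
      ≤ ∑ a, pr μ (fun ω => (U ω, V ω)) (a, b) * Real.logb 2 (pr μ V b) := by
        refine Finset.sum_le_sum fun a _ => ?_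
        rcases eq_or_lt_of_le (pr_nonneg μ h0 (fun ω => (U ω, V ω)) (a, b)) with hp | hp
        · rw [← hp, zero_mul, zero_mul]
        · have hle := pr_le_pair μ h0 U V a b
          exact mul_le_mul_of_nonneg_left
            ((Real.logb_le_logb one_lt_two hp (lt_of_lt_of_le hp hle)).mpr hle) hp.le
    _ = (∑ a, pr μ (fun ω => (U ω, V ω)) (a, b)) * Real.logb 2 (pr μ V b) :=
        (Finset.sum_mul _ _ _).symm
    _ = pr μ V b * Real.logb 2 (pr μ V b) := by rw [pr_snd]

lemma entH_indep {α β : Type*} [Fintype α] [DecidableEq α] [Fintype β] [DecidableEq β]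
    (hμ : IsPMF μ) (U : Ω → α) (V : Ω → β) (h : IndepRV μ U V) :
    entH μ (fun ω => (U ω, V ω)) = entH μ U + entH μ V := by
  have h' : ∀ a b, pr μ (fun ω => (U ω, V ω)) (a, b) = pr μ U a * pr μ V b := h
  unfold entH
  simp only [Fintype.sum_prod_type, h']
  have key : ∀ a b, pr μ U a * pr μ V b * Real.logb 2 (pr μ U a * pr μ V b)
      = pr μ V b * (pr μ U a * Real.logb 2 (pr μ U a))
        + pr μ U a * (pr μ V b * Real.logb 2 (pr μ V b)) := by
    intro a b
    rcases eq_or_ne (pr μ U a) 0 with h1 | h1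
    · simp [h1]
    rcases eq_or_ne (pr μ V b) 0 with h2 | h2
    · simp [h2]
    rw [Real.logb_mul h1 h2]
    ring
  have e1 : ∀ a, ∑ b, pr μ V b * (pr μ U a * Real.logb 2 (pr μ U a))
      = pr μ U a * Real.logb 2 (pr μ U a) := by
    intro a
    rw [← Finset.sum_mul, pr_sum μ hμ.2, one_mul]
  have e2 : ∀ a, ∑ b, pr μ U a * (pr μ V b * Real.logb 2 (pr μ V b))
      = pr μ U a * ∑ b, pr μ V b * Real.logb 2 (pr μ V b) :=
    fun a => (Finset.mul_sum _ _ _).symm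
  simp only [key, Finset.sum_add_distrib, e1, e2]
  rw [← Finset.sum_mul, pr_sum μ hμ.2, one_mul]
  ring

lemma entH_unit (hμ : IsPMF μ) : entH μ (fun _ : Ω => ()) = 0 := by
  have h1 : ∀ a : Unit, pr μ (fun _ : Ω => ()) a = 1 := by
    intro a
    unfold pr
    simp [eq_iff_true_of_subsingleton, hμ.2]
  unfold entH
  simp [h1]

lemma entH_subadd {α γ : Type*} [Fintype α] [DecidableEq α] [Fintype γ] [DecidableEq γ]
    (hμ : IsPMF μ) (U : Ω → α) (W : Ω → γ) :
    entH μ (fun ω => (U ω, W ω)) ≤ entH μ U + entH μ W := by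
  have h := entH_submod μ hμ U (fun _ => ()) W
  have r1 : entH μ (fun ω => (U ω, (), W ω)) = entH μ (fun ω => (U ω, W ω)) := by
    refine (entH_comp μ (fun ω => (U ω, (), W ω)) (fun ω => (U ω, W ω))
      (fun p => (p.1, p.2.2)) ?_ (fun ω => rfl)).symm
    intro u v hv
    simp [Prod.ext_iff, eq_iff_true_of_subsingleton] at hv ⊢
    tauto
  have r2 : entH μ (fun ω => (U ω, ())) = entH μ U := by
    refine entH_comp μ U (fun ω => (U ω, ())) (fun a => (a, ())) ?_ (fun ω => rfl)
    intro u v hv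
    simpa [Prod.ext_iff] using hv
  have r3 : entH μ (fun ω => ((), W ω)) = entH μ W := by
    refine entH_comp μ W (fun ω => ((), W ω)) (fun c => ((), c)) ?_ (fun ω => rfl)
    intro u v hv
    simpa [Prod.ext_iff] using hv
  rw [r1, entH_unit μ hμ, r2, r3] at h
  linarith

end aux2

/-- if `H(X | A, Q, Y) = 0`, `H(X' | A, Q, X, Y, Y') = 0`,
`X` is independent of `(Q, Y)`, and `X'` is independent of `(Q, X, Y, Y')`,
then `H(A) ≥ H(X) + H(X')`. -/
theorem stmt19 {Ω α β β' γ δ δ' : Type*} [Fintype Ω]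
    [Fintype α] [DecidableEq α] [Fintype β] [DecidableEq β]
    [Fintype β'] [DecidableEq β'] [Fintype γ] [DecidableEq γ]
    [Fintype δ] [DecidableEq δ] [Fintype δ'] [DecidableEq δ']
    (μ : Ω → ℝ) (hμ : IsPMF μ)
    (A : Ω → γ) (Q : Ω → α) (Y : Ω → β) (Y' : Ω → β')
    (X : Ω → δ) (X' : Ω → δ')
    (hrec : condH μ X (fun ω => (A ω, Q ω, Y ω)) = 0)
    (hrec' : condH μ X' (fun ω => (A ω, Q ω, X ω, Y ω, Y' ω)) = 0)
    (hind : IndepRV μ X (fun ω => (Q ω, Y ω)))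
    (hind' : IndepRV μ X' (fun ω => (Q ω, X ω, Y ω, Y' ω))) :
    entH μ A ≥ entH μ X + entH μ X' := by
  obtain ⟨hμ0, hμ1⟩ := hμ
  have hμ' : IsPMF μ := ⟨hμ0, hμ1⟩
  have f1 : entH μ (fun ω => (A ω, Q ω, Y ω)) ≤ entH μ A + entH μ (fun ω => (Q ω, Y ω)) :=
    entH_subadd μ hμ' A (fun ω => (Q ω, Y ω))
  have f2 : entH μ (fun ω => (X ω, A ω, Q ω, Y ω)) = entH μ (fun ω => (A ω, Q ω, Y ω)) :=
    sub_eq_zero.mp hrec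
  have f3 : entH μ (fun ω => (X ω, Q ω, Y ω)) = entH μ X + entH μ (fun ω => (Q ω, Y ω)) :=
    entH_indep μ hμ' X (fun ω => (Q ω, Y ω)) hind
  have r1 : entH μ (fun ω => (A ω, (X ω, Q ω, Y ω))) = entH μ (fun ω => (X ω, A ω, Q ω, Y ω)) := by
    refine entH_comp μ _ _
      (fun p => (p.2.1, (p.1, p.2.2.1, p.2.2.2))) ?_ (fun ω => rfl)
    intro u v hv
    simp only [Prod.ext_iff] at hv ⊢
    tauto
  have f4 : entH μ (fun ω => (A ω, (X ω, Q ω, Y ω), Y' ω)) + entH μ (fun ω => (X ω, Q ω, Y ω))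
      ≤ entH μ (fun ω => (A ω, (X ω, Q ω, Y ω))) + entH μ (fun ω => ((X ω, Q ω, Y ω), Y' ω)) :=
    entH_submod μ hμ' A (fun ω => (X ω, Q ω, Y ω)) Y'
  have r2 : entH μ (fun ω => (A ω, Q ω, X ω, Y ω, Y' ω))
      = entH μ (fun ω => (A ω, (X ω, Q ω, Y ω), Y' ω)) := by
    refine entH_comp μ _ _
      (fun p => (p.1, (p.2.1.2.1, (p.2.1.1, (p.2.1.2.2, p.2.2))))) ?_ (fun ω => rfl)
    intro u v hv
    simp only [Prod.ext_iff] at hv ⊢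
    tauto
  have r3 : entH μ (fun ω => (Q ω, X ω, Y ω, Y' ω))
      = entH μ (fun ω => ((X ω, Q ω, Y ω), Y' ω)) := by
    refine entH_comp μ _ _
      (fun p => (p.1.2.1, (p.1.1, (p.1.2.2, p.2)))) ?_ (fun ω => rfl)
    intro u v hv
    simp only [Prod.ext_iff] at hv ⊢
    tauto
  have f5 : entH μ (fun ω => (X' ω, A ω, Q ω, X ω, Y ω, Y' ω))
      = entH μ (fun ω => (A ω, Q ω, X ω, Y ω, Y' ω)) :=
    sub_eq_zero.mp hrec'
  have r4 : entH μ (fun ω => (A ω, (X' ω, Q ω, X ω, Y ω, Y' ω)))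
      = entH μ (fun ω => (X' ω, A ω, Q ω, X ω, Y ω, Y' ω)) := by
    refine entH_comp μ _ _
      (fun p => (p.2.1, (p.1, p.2.2))) ?_ (fun ω => rfl)
    intro u v hv
    simp only [Prod.ext_iff] at hv ⊢
    tauto
  have f6 : entH μ (fun ω => (X' ω, Q ω, X ω, Y ω, Y' ω))
      ≤ entH μ (fun ω => (A ω, (X' ω, Q ω, X ω, Y ω, Y' ω))) :=
    entH_snd_le μ hμ0 A (fun ω => (X' ω, Q ω, X ω, Y ω, Y' ω))
  have f7 : entH μ (fun ω => (X' ω, Q ω, X ω, Y ω, Y' ω))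
      = entH μ X' + entH μ (fun ω => (Q ω, X ω, Y ω, Y' ω)) :=
    entH_indep μ hμ' X' (fun ω => (Q ω, X ω, Y ω, Y' ω)) hind'
  linarith [f1, f2, f3, f4, r1, r2, r3, f5, r4, f6, f7]
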